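/- For all 1 ≤ k ≤ n, the word P_0(k) is a suffix of P_0(n), where P_0(m) := R_{m+1}[:−2]. -/

import Mathlib

def rho (w : List ℕ) : List ℕ := w.flatMap (fun n => [0, n + 1])

def R (n : ℕ) : List ℕ := rho^[n] [0]

def P0 (n : ℕ) : List ℕ := (R (n + 1)).dropLast.dropLast

lemma rho_append (u v : List ℕ) : rho (u ++ v) = rho u ++ rho v := by
  simp [rho]

lemma R_succ (n : ℕ) : R (n + 1) = rho (R n) := by
  simp [R, Function.iterate_succ_apply']

lemma R_concat (n : ℕ) : ∃ w, R n = w ++ [n] := by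
  induction n with
  | zero => exact ⟨[], rfl⟩
  | succ n ih =>
    obtain ⟨w, hw⟩ := ih
    exact ⟨rho w ++ [0], by simp [R_succ, hw, rho_append, rho]⟩

lemma R_eq_dropLast (n : ℕ) : R n = (R n).dropLast ++ [n] := by
  obtain ⟨w, hw⟩ := R_concat n
  rw [hw, List.dropLast_concat]

lemma R_ne_nil (n : ℕ) : R n ≠ [] := by
  obtain ⟨w, hw⟩ := R_concat n
  simp [hw]

lemma R_key (n : ℕ) : R (n + 1) = R n ++ (R n).dropLast ++ [n + 1] := by
  induction n with
  | zero => rfl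
  | succ n ih =>
    have e2 : R (n + 1) = rho ((R n).dropLast) ++ [0] ++ [n + 1] := by
      rw [R_succ]
      conv_lhs => rw [R_eq_dropLast n]
      rw [rho_append]
      simp [rho]
    have e3 : (R (n + 1)).dropLast = rho ((R n).dropLast) ++ [0] := by
      rw [e2, List.dropLast_concat]
    calc R (n + 2) = rho (R (n + 1)) := R_succ _
      _ = rho (R n ++ (R n).dropLast ++ [n + 1]) := by rw [← ih]
      _ = rho (R n) ++ rho ((R n).dropLast) ++ rho [n + 1] := by
          rw [rho_append, rho_append]
      _ = R (n + 1) ++ (R (n + 1)).dropLast ++ [n + 2] := by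
          rw [← R_succ, e3]; simp [rho, List.append_assoc]

lemma P0_succ (n : ℕ) : P0 (n + 1) = R (n + 1) ++ P0 n := by
  unfold P0
  rw [R_key (n + 1), List.dropLast_concat,
    List.dropLast_append_of_ne_nil (l := (R (n + 1)).dropLast)]
  intro h
  have := R_eq_dropLast (n + 1)
  rw [h, R_key n] at this
  obtain ⟨w, hw⟩ := R_concat n
  rw [hw] at this
  have hlen := congrArg List.length this
  simp at hlen
  omega

/-- For all 1 ≤ k ≤ n, P₀(k) is a suffix of P₀(n). -/
theorem P0_suffix (k n : ℕ) (hk : 1 ≤ k) (hkn : k ≤ n) : P0 k <:+ P0 n := by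
  induction n with
  | zero => omega
  | succ n ih =>
    rcases Nat.lt_or_ge k (n + 1) with h | h
    · exact (ih (by omega)).trans ⟨R (n + 1), (P0_succ n).symm⟩
    · have : k = n + 1 := by omega
      subst this
      exact List.suffix_refl _
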